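/- Let n, k, t be positive integers with t ≤ k, t dividing k, and n = (1/2)·k·(k/t + 1) + 1. Then ϖ(n,k,t) ≤ (k/t + 1)/(1 − k/n) = ((k² + kt + 2t)/(k² − kt + 2t))·(k/t + 1), where the right-hand side is evaluated over the real numbers. -/

import Mathlib

open Finset

/-- `H` is a family of subsets of `[n] = {1, …, n}`. -/
def OnGround (n : ℕ) (H : Finset (Finset ℕ)) : Prop :=
  ∀ A ∈ H, A ⊆ Finset.Icc 1 n

/-- `H` is `k`-uniform: every member has cardinality `k`. -/
def Uniform (k : ℕ) (H : Finset (Finset ℕ)) : Prop :=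
  ∀ A ∈ H, A.card = k

/-- `H` is at most `t`-intersecting: distinct members meet in at most `t` elements. -/
def AtMostIntersecting (t : ℕ) (H : Finset (Finset ℕ)) : Prop :=
  ∀ A ∈ H, ∀ B ∈ H, A ≠ B → (A ∩ B).card ≤ t

/-- `H` is maximally cover-free: no member is contained in the union of the others. -/
def MaxCoverFree (H : Finset (Finset ℕ)) : Prop :=
  ∀ A ∈ H, ¬ A ⊆ (H.erase A).biUnion id

/-- `ϖ(n,k,t)`: the maximum size of an at most `t`-intersecting, `k`-uniform
family of subsets of `[n]`. -/
noncomputable def varpi (n k t : ℕ) : ℕ :=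
  sSup {m | ∃ H : Finset (Finset ℕ),
    OnGround n H ∧ Uniform k H ∧ AtMostIntersecting t H ∧ H.card = m}

lemma counting (n k t : ℕ) (H : Finset (Finset ℕ)) (hg : OnGround n H)
    (hu : Uniform k H) (hi : AtMostIntersecting t H) :
    (H.card * k) ^ 2 ≤ n * (H.card * k + t * (H.card * (H.card - 1))) := by
  classical
  set I := Finset.Icc 1 n with hI
  have hIcard : I.card = n := by simp [hI]
  have hsum1 : ∑ x ∈ I, (H.filter (fun A => x ∈ A)).card = H.card * k := by
    simp_rw [Finset.card_filter]
    rw [Finset.sum_comm]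
    have : ∀ A ∈ H, (∑ x ∈ I, if x ∈ A then 1 else 0) = k := by
      intro A hA
      rw [← Finset.card_filter]
      have : I.filter (fun x => x ∈ A) = A := by
        rw [Finset.filter_mem_eq_inter, Finset.inter_eq_right]
        exact hg A hA
      rw [this, hu A hA]
    rw [Finset.sum_congr rfl this, Finset.sum_const, smul_eq_mul]
  have hsum2 : ∑ x ∈ I, ((H.filter (fun A => x ∈ A)).card) ^ 2 ≤
      H.card * k + t * (H.card * (H.card - 1)) := by
    have hdx : ∀ x : ℕ, ((H.filter (fun A => x ∈ A)).card) ^ 2 = ∑ A ∈ H, ∑ B ∈ H,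
        if x ∈ A ∧ x ∈ B then 1 else 0 := by
      intro x
      rw [sq, Finset.card_filter, Finset.sum_mul_sum]
      refine Finset.sum_congr rfl fun A _ => Finset.sum_congr rfl fun B _ => ?_
      by_cases h1 : x ∈ A <;> by_cases h2 : x ∈ B <;> simp [h1, h2]
    calc ∑ x ∈ I, ((H.filter (fun A => x ∈ A)).card) ^ 2
        = ∑ A ∈ H, ∑ B ∈ H, (A ∩ B).card := by
          simp_rw [hdx]
          rw [Finset.sum_comm]
          refine Finset.sum_congr rfl fun A hA => ?_
          rw [Finset.sum_comm]
          refine Finset.sum_congr rfl fun B hB => ?_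
          rw [← Finset.card_filter]
          congr 1
          rw [Finset.filter_and, Finset.filter_mem_eq_inter, Finset.filter_mem_eq_inter,
            ← Finset.inter_inter_distrib_left]
          rw [Finset.inter_eq_right.2 ((Finset.inter_subset_left).trans (hg A hA))]
      _ ≤ ∑ _A ∈ H, (k + (H.card - 1) * t) := by
          refine Finset.sum_le_sum fun A hA => ?_
          rw [← Finset.sum_erase_add H _ hA]
          have h1 : (A ∩ A).card = k := by rw [Finset.inter_self]; exact hu A hA
          have h2 : ∑ B ∈ H.erase A, (A ∩ B).card ≤ (H.card - 1) * t := by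
            have := Finset.sum_le_card_nsmul (H.erase A) (fun B => (A ∩ B).card) t ?_
            · simpa [Finset.card_erase_of_mem hA, mul_comm] using this
            · intro B hB
              exact hi A hA B (Finset.mem_of_mem_erase hB)
                (Finset.ne_of_mem_erase hB).symm
          omega
      _ = H.card * k + t * (H.card * (H.card - 1)) := by
          rw [Finset.sum_const, smul_eq_mul]; ring
  have cs : (∑ x ∈ I, (H.filter (fun A => x ∈ A)).card) ^ 2 ≤
      I.card * ∑ x ∈ I, ((H.filter (fun A => x ∈ A)).card) ^ 2 := by
    have := sq_sum_le_card_mul_sum_sq (s := I)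
      (f := fun x => ((H.filter (fun A => x ∈ A)).card : ℝ))
    exact_mod_cast this
  rw [hsum1, hIcard] at cs
  exact cs.trans (Nat.mul_le_mul_left n hsum2)

lemma trivialBound (n k : ℕ) (H : Finset (Finset ℕ)) (hg : OnGround n H)
    (hu : Uniform k H) : H.card ≤ n.choose k := by
  have hsub : H ⊆ (Finset.Icc 1 n).powersetCard k := fun A hA =>
    Finset.mem_powersetCard.2 ⟨hg A hA, hu A hA⟩
  calc H.card ≤ ((Finset.Icc 1 n).powersetCard k).card := Finset.card_le_card hsub
    _ = n.choose k := by rw [Finset.card_powersetCard, Nat.card_Icc]; simp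

lemma auxD (T S N : ℝ) (hnR : 2*N = T*S*(S+1)+2) (hts2 : T+2 ≤ T*S) (hsR : 2 ≤ S) (htR : 1 ≤ T) :
    0 < T*S*S - N := by
  nlinarith [mul_le_mul_of_nonneg_right hts2 (by linarith : (0:ℝ) ≤ S - 1),
    mul_nonneg (by linarith : (0:ℝ) ≤ T + 2) (by linarith : (0:ℝ) ≤ S - 2)]

lemma aux1 (M T S N : ℝ) (h : 0 ≤ T*M*(N*(S-1) - M*(T*S*S-N))) (htm : 0 < T*M) :
    M*(T*S*S-N) ≤ N*(S-1) := by nlinarith [h, htm]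

lemma aux4 (M T S N : ℝ) (h1 : M*(T*S*S-N) ≤ N*(S-1)) (hG : 0 ≤ N - T*S) (hD : 0 < T*S*S-N)
    (h3 : N*(S-1)*(N-T*S) ≤ N*(S+1)*(T*S*S-N)) : M*(N-T*S) ≤ N*(S+1) := by
  nlinarith [mul_le_mul_of_nonneg_right h1 hG, h3, hD]

/-- Let `t ≤ k` be positive integers with `t ∣ k`, and let
`n = (1/2)·k·(k/t + 1) + 1` (expressed as `2n = k·(k/t + 1) + 2`). Then
`ϖ(n,k,t) ≤ (k/t + 1)/(1 − k/n) = ((k² + kt + 2t)/(k² − kt + 2t))·(k/t + 1)`,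
the right-hand sides being evaluated over ℝ. -/
theorem stmt7 (n k t : ℕ) (hn : 0 < n) (hk : 0 < k) (ht : 0 < t)
    (htk : t ≤ k) (hdvd : t ∣ k) (hval : 2 * n = k * (k / t + 1) + 2) :
    (varpi n k t : ℝ) ≤ ((k : ℝ) / t + 1) / (1 - (k : ℝ) / n) ∧
    ((k : ℝ) / t + 1) / (1 - (k : ℝ) / n) =
      (((k : ℝ) ^ 2 + k * t + 2 * t) / ((k : ℝ) ^ 2 - k * t + 2 * t)) *
        ((k : ℝ) / t + 1) := by
  -- basic setup
  obtain ⟨s, hks⟩ : ∃ s, k = t * s := hdvd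
  have hdiv : k / t = s := by rw [hks, Nat.mul_div_cancel_left _ ht]
  rw [hdiv] at hval
  have hs1 : 1 ≤ s := by
    rcases Nat.eq_zero_or_pos s with h | h
    · subst h; simp at hks; omega
    · omega
  have hnk : k + 1 ≤ n := by
    have h2 : k * 2 ≤ k * (s + 1) := Nat.mul_le_mul_left k (by omega)
    omega
  -- real versions
  have htR : (1:ℝ) ≤ t := by exact_mod_cast ht
  have hkR : (k:ℝ) = t * s := by exact_mod_cast hks
  have hnR : 2 * (n:ℝ) = t * s * (s + 1) + 2 := by
    have : ((2 * n : ℕ) : ℝ) = ((k * (s + 1) + 2 : ℕ) : ℝ) := by rw [hval]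
    push_cast at this
    linear_combination this + ((s:ℝ) + 1) * hkR
  have hn0 : (0:ℝ) < n := by exact_mod_cast hn
  have ht0 : (0:ℝ) < t := by exact_mod_cast ht
  have hk0 : (0:ℝ) < k := by exact_mod_cast hk
  have hnkR : (k:ℝ) + 1 ≤ n := by exact_mod_cast hnk
  have hdenpos : (0:ℝ) < 1 - (k:ℝ) / n := by
    rw [sub_pos, div_lt_one hn0]; linarith
  have h2t : 2 * (n:ℝ) * t = k ^ 2 + k * t + 2 * t := by
    nlinarith [hnR, hkR]
  have heq : ((k : ℝ) / t + 1) / (1 - (k : ℝ) / n) =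
      (((k : ℝ) ^ 2 + k * t + 2 * t) / ((k : ℝ) ^ 2 - k * t + 2 * t)) *
        ((k : ℝ) / t + 1) := by
    have hden2 : (k:ℝ) ^ 2 - k * t + 2 * t = 2 * t * (n - k) := by nlinarith [h2t]
    have hnk0 : (0:ℝ) < n - k := by linarith
    have e1 : 1 - (k:ℝ)/n = ((n:ℝ)-k)/n := by field_simp
    rw [hden2, ← h2t, e1, div_div_eq_mul_div]
    have e2 : (2*(n:ℝ)*t)/(2*t*(n-k)) = n/(n-k) := by
      rw [div_eq_div_iff (by positivity) (by linarith)]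
      ring
    rw [e2]
    ring
  refine ⟨?_, heq⟩
  -- the bound
  have hSne : Set.Nonempty {m | ∃ H : Finset (Finset ℕ),
      OnGround n H ∧ Uniform k H ∧ AtMostIntersecting t H ∧ H.card = m} :=
    ⟨0, ∅, by simp [OnGround, Uniform, AtMostIntersecting]⟩
  have hBpos : 0 < ((k : ℝ) / t + 1) / (1 - (k : ℝ) / n) := by
    apply div_pos _ hdenpos
    positivity
  have key : ∀ m : ℕ, (∃ H : Finset (Finset ℕ),
      OnGround n H ∧ Uniform k H ∧ AtMostIntersecting t H ∧ H.card = m) →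
      (m : ℝ) ≤ ((k : ℝ) / t + 1) / (1 - (k : ℝ) / n) := by
    rintro m ⟨H, hg, hu, hi, hcard⟩
    rcases Nat.eq_zero_or_pos m with hm0 | hm1
    · rw [hm0]; exact_mod_cast hBpos.le
    -- case split
    rcases eq_or_lt_of_le hs1 with hseq | hs2
    · -- s = 1, k = t, n = k + 1
      have hs' : s = 1 := hseq.symm
      subst hs'
      have hkt : k = t := by omega
      have hnk1 : n = k + 1 := by omega
      have hmn : m ≤ n := by
        have := trivialBound n k H hg hu
        rw [hnk1, Nat.choose_succ_self_right] at this
        omega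
      have hnR1 : (n:ℝ) = k + 1 := by exact_mod_cast hnk1
      rw [le_div_iff₀ hdenpos]
      have hmnR : (m:ℝ) ≤ n := by exact_mod_cast hmn
      have h1 : 1 - (k:ℝ)/n = 1/n := by
        rw [hnR1]; field_simp; ring
      rw [h1]
      have : (m:ℝ) * (1/n) ≤ 1 := by
        rw [mul_one_div, div_le_one hn0]; exact hmnR
      have hkt1 : (1:ℝ) ≤ (k:ℝ)/t := by
        rw [le_div_iff₀ ht0, one_mul]; exact_mod_cast htk
      linarith
    · -- s ≥ 2
      by_cases hdeg : s = 2 ∧ t = 1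
      · -- k = 2, t = 1, n = 4
        obtain ⟨hs2', ht1⟩ := hdeg
        have hk2 : k = 2 := by rw [hs2', ht1] at hks; omega
        have hn4 : n = 4 := by rw [hs2', hk2] at hval; omega
        have hm6 : m ≤ 6 := by
          have h := trivialBound n k H hg hu
          rw [hn4, hk2] at h
          have h6 : Nat.choose 4 2 = 6 := by decide
          omega
        rw [hk2, ht1, hn4]
        have hm6R : (m:ℝ) ≤ 6 := by exact_mod_cast hm6
        push_cast
        norm_num
        linarith
      · -- main counting case
        have hts2 : (t:ℝ) + 2 ≤ t * s := by
          rcases Nat.lt_or_ge t 2 with ht1 | ht2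
          · have ht1' : t = 1 := by omega
            have hs3 : 3 ≤ s := by
              rcases Nat.lt_or_ge s 3 with h | h
              · exfalso; exact hdeg ⟨by omega, ht1'⟩
              · exact h
            have : (3:ℝ) ≤ s := by exact_mod_cast hs3
            rw [ht1']; push_cast; linarith
          · have : (2:ℝ) ≤ t := by exact_mod_cast ht2
            have hsR : (2:ℝ) ≤ s := by exact_mod_cast hs2
            nlinarith
        have hsR : (2:ℝ) ≤ s := by exact_mod_cast hs2
        have hmR : (1:ℝ) ≤ m := by exact_mod_cast hm1
        -- counting inequality over ℝ
        have hcount : ((m:ℝ) * k) ^ 2 ≤ n * (m * k + t * (m * ((m:ℝ) - 1))) := by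
          have hc := counting n k t H hg hu hi
          rw [hcard] at hc
          have hc' : (((m * k) ^ 2 : ℕ) : ℝ) ≤ ((n * (m * k + t * (m * (m - 1))) : ℕ) : ℝ) := by
            exact_mod_cast hc
          push_cast [Nat.cast_sub hm1] at hc'
          convert hc' using 2 <;> push_cast <;> ring
        -- derive M * (T*S*S - N) ≤ N * (S - 1)
        have hcount2 : 0 ≤ (t:ℝ) * m * ((n:ℝ) * ((s:ℝ)-1) - m * ((t:ℝ)*s*s - n)) := by
          have hexp : (n:ℝ) * (m * ((t:ℝ)*s) + t * (m * ((m:ℝ) - 1))) - ((m:ℝ) * ((t:ℝ)*s)) ^ 2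
              = (t:ℝ) * m * ((n:ℝ) * ((s:ℝ)-1) - m * ((t:ℝ)*s*s - n)) := by ring
          rw [hkR] at hcount
          linarith [hexp, hcount]
        have htm : (0:ℝ) < (t:ℝ) * m := by
          have : (0:ℝ) < (m:ℝ) := by linarith
          positivity
        have h1 : (m:ℝ) * ((t:ℝ) * s * s - n) ≤ n * ((s:ℝ) - 1) :=
          aux1 _ _ _ _ hcount2 htm
        have hD : (0:ℝ) < (t:ℝ) * s * s - n := auxD _ _ _ hnR hts2 hsR htR
        have hG : (0:ℝ) < (n:ℝ) - t * s := by
          have : (k:ℝ) < n := by linarith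
          rw [hkR] at this; linarith
        have h3eq : (n:ℝ) * ((s:ℝ) + 1) * ((t:ℝ)*s*s - n) - n * ((s:ℝ) - 1) * ((n:ℝ) - t*s)
            = (n:ℝ) * s * ((t:ℝ)*s - t - 2) := by
          linear_combination (-(n:ℝ) * (s:ℝ)) * hnR
        have h3 : (n:ℝ) * ((s:ℝ) - 1) * ((n:ℝ) - t*s) ≤ n * ((s:ℝ) + 1) * ((t:ℝ)*s*s - n) := by
          have hnn : (0:ℝ) ≤ (n:ℝ) * s * ((t:ℝ)*s - t - 2) := by
            apply mul_nonneg (mul_nonneg hn0.le (by linarith : (0:ℝ) ≤ (s:ℝ)))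
            linarith
          linarith [h3eq, hnn]
        have h4 : (m:ℝ) * ((n:ℝ) - t*s) ≤ n * ((s:ℝ) + 1) :=
          aux4 _ _ _ _ h1 hG.le hD h3
        -- convert to goal
        rw [le_div_iff₀ hdenpos]
        have hks' : (k:ℝ)/t = s := by rw [hkR, mul_div_cancel_left₀ _ ht0.ne']
        have e1 : 1 - (k:ℝ)/n = ((n:ℝ) - t*s)/n := by
          rw [hkR, sub_div, div_self hn0.ne']
        rw [e1, hks', mul_div_assoc']
        rw [div_le_iff₀ hn0]
        exact h4.trans_eq (mul_comm _ _)
  have hfloor : varpi n k t ≤ Nat.floor (((k : ℝ) / t + 1) / (1 - (k : ℝ) / n)) := by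
    unfold varpi
    exact csSup_le hSne fun m hm => Nat.le_floor (key m hm)
  calc (varpi n k t : ℝ)
      ≤ (Nat.floor (((k : ℝ) / t + 1) / (1 - (k : ℝ) / n)) : ℝ) := by exact_mod_cast hfloor
    _ ≤ ((k : ℝ) / t + 1) / (1 - (k : ℝ) / n) := Nat.floor_le hBpos.le
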